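/- Let α_A, α_B ≥ 0 with α_A + α_B ≥ 2. Let ρ be a density matrix on ℂ^{d_A} ⊗ ℂ^{d_B}, let A₀, A₁ be Hermitian d_A×d_A matrices with A₀² = A₁² = I, and B₀, B₁ Hermitian d_B×d_B matrices with B₀² = B₁² = I. Then Tr[ρ(A₀⊗B₀ + A₀⊗B₁ + A₁⊗B₀ − A₁⊗B₁)] + α_A·Tr[ρ(A₀⊗I)] + α_B·Tr[ρ(I⊗B₀)] ≤ 2 + α_A + α_B. -/

import Mathlib

open Matrix
open scoped Kronecker ComplexOrder

/-- Conjugate transpose of a Kronecker product. -/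
lemma kron_conjT {m n : Type*} [Fintype m] [Fintype n] (A : Matrix m m ℂ) (B : Matrix n n ℂ) :
    (A ⊗ₖ B)ᴴ = Aᴴ ⊗ₖ Bᴴ := by
  ext ⟨i, j⟩ ⟨k, l⟩
  simp [conjTranspose_apply, kroneckerMap_apply, mul_comm]

lemma psd_exists_conjT_mul_self {n : Type*} [Fintype n] [DecidableEq n] {A : Matrix n n ℂ}
    (hA : A.PosSemidef) : ∃ B : Matrix n n ℂ, A = Bᴴ * B := by
  open scoped MatrixOrder in
  exact CStarAlgebra.nonneg_iff_eq_star_mul_self.mp hA.nonneg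

/-- Kronecker product of positive semidefinite matrices is positive semidefinite. -/
lemma kron_psd {m n : Type*} [Fintype m] [Fintype n] [DecidableEq m] [DecidableEq n]
    {A : Matrix m m ℂ} {B : Matrix n n ℂ}
    (hA : A.PosSemidef) (hB : B.PosSemidef) : (A ⊗ₖ B).PosSemidef := by
  obtain ⟨U, rfl⟩ := psd_exists_conjT_mul_self hA
  obtain ⟨V, rfl⟩ := psd_exists_conjT_mul_self hB
  rw [mul_kronecker_mul, ← kron_conjT]
  exact posSemidef_conjTranspose_mul_self _

/-- Real part of trace of a PSD matrix is nonnegative. -/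
lemma trace_psd_re_nonneg {n : Type*} [Fintype n] [DecidableEq n] {M : Matrix n n ℂ} (hM : M.PosSemidef) :
    0 ≤ (M.trace).re := by
  rw [Matrix.trace, Complex.re_sum]
  refine Finset.sum_nonneg fun i _ => ?_
  have := hM.re_dotProduct_nonneg (Pi.single i 1)
  simpa [dotProduct, mulVec, Pi.single_apply, Finset.mul_sum, diag] using this

/-- Re Tr(ρ P) ≥ 0 for ρ, P PSD. -/
lemma trace_mul_psd_re_nonneg {n : Type*} [Fintype n] [DecidableEq n] {ρ P : Matrix n n ℂ}
    (hρ : ρ.PosSemidef) (hP : P.PosSemidef) : 0 ≤ ((ρ * P).trace).re := by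
  obtain ⟨B, rfl⟩ := psd_exists_conjT_mul_self hP
  have h : (ρ * (Bᴴ * B)).trace = (B * ρ * Bᴴ).trace := by
    rw [← mul_assoc, Matrix.trace_mul_comm, ← mul_assoc]
  rw [h]
  exact trace_psd_re_nonneg (hρ.mul_mul_conjTranspose_same B)

lemma sq_one_sub {d : ℕ} (A : Matrix (Fin d) (Fin d) ℂ) (hA : A.IsHermitian)
    (hA2 : A * A = 1) :
    (1 - A) * (1 - A)ᴴ = (2 : ℂ) • (1 : Matrix (Fin d) (Fin d) ℂ) + (-2 : ℂ) • A := by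
  rw [conjTranspose_sub, conjTranspose_one, hA.eq]
  have h : (1 - A) * (1 - A) = 1 - A - A + A * A := by noncomm_ring
  rw [h, hA2]
  module

lemma sq_one_add {d : ℕ} (A : Matrix (Fin d) (Fin d) ℂ) (hA : A.IsHermitian)
    (hA2 : A * A = 1) :
    (1 + A) * (1 + A)ᴴ = (2 : ℂ) • (1 : Matrix (Fin d) (Fin d) ℂ) + (2 : ℂ) • A := by
  rw [conjTranspose_add, conjTranspose_one, hA.eq]
  have h : (1 + A) * (1 + A) = 1 + A + A + A * A := by noncomm_ring
  rw [h, hA2]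
  module

/-- the doubly tilted CHSH functional cannot exceed the local
bound when α_A + α_B ≥ 2. -/
theorem tilted_chsh_no_quantum_advantage (dA dB : ℕ) (αA αB : ℝ)
    (hαA : 0 ≤ αA) (hαB : 0 ≤ αB) (hsum : 2 ≤ αA + αB)
    (ρ : Matrix (Fin dA × Fin dB) (Fin dA × Fin dB) ℂ)
    (hρ : ρ.PosSemidef) (hρtr : ρ.trace = 1)
    (A₀ A₁ : Matrix (Fin dA) (Fin dA) ℂ)
    (B₀ B₁ : Matrix (Fin dB) (Fin dB) ℂ)
    (hA₀ : A₀.IsHermitian) (hA₁ : A₁.IsHermitian)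
    (hA₀2 : A₀ * A₀ = 1) (hA₁2 : A₁ * A₁ = 1)
    (hB₀ : B₀.IsHermitian) (hB₁ : B₁.IsHermitian)
    (hB₀2 : B₀ * B₀ = 1) (hB₁2 : B₁ * B₁ = 1) :
    ((ρ * (A₀ ⊗ₖ B₀ + A₀ ⊗ₖ B₁ + A₁ ⊗ₖ B₀ - A₁ ⊗ₖ B₁)).trace).re
      + αA * ((ρ * (A₀ ⊗ₖ (1 : Matrix (Fin dB) (Fin dB) ℂ))).trace).re
      + αB * ((ρ * ((1 : Matrix (Fin dA) (Fin dA) ℂ) ⊗ₖ B₀)).trace).re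
      ≤ 2 + αA + αB := by
  -- PSD building blocks
  have pA0m : ((1 - A₀) * (1 - A₀)ᴴ).PosSemidef := posSemidef_self_mul_conjTranspose _
  have pA0p : ((1 + A₀) * (1 + A₀)ᴴ).PosSemidef := posSemidef_self_mul_conjTranspose _
  have pA1m : ((1 - A₁) * (1 - A₁)ᴴ).PosSemidef := posSemidef_self_mul_conjTranspose _
  have pA1p : ((1 + A₁) * (1 + A₁)ᴴ).PosSemidef := posSemidef_self_mul_conjTranspose _
  have pB0m : ((1 - B₀) * (1 - B₀)ᴴ).PosSemidef := posSemidef_self_mul_conjTranspose _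
  have pB0p : ((1 + B₀) * (1 + B₀)ᴴ).PosSemidef := posSemidef_self_mul_conjTranspose _
  have pB1m : ((1 - B₁) * (1 - B₁)ᴴ).PosSemidef := posSemidef_self_mul_conjTranspose _
  have pB1p : ((1 + B₁) * (1 + B₁)ᴴ).PosSemidef := posSemidef_self_mul_conjTranspose _
  -- the four SOS certificates
  have hS1 : (( ((1 - A₀) * (1 - A₀)ᴴ) ⊗ₖ ((1 + B₀) * (1 + B₀)ᴴ + (1 + B₁) * (1 + B₁)ᴴ)
      + ((1 + A₁) * (1 + A₁)ᴴ) ⊗ₖ ((1 - B₀) * (1 - B₀)ᴴ)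
      + ((1 - A₁) * (1 - A₁)ᴴ) ⊗ₖ ((1 - B₁) * (1 - B₁)ᴴ) )).PosSemidef :=
    ((kron_psd pA0m (pB0p.add pB1p)).add (kron_psd pA1p pB0m)).add (kron_psd pA1m pB1m)
  have hS2 : (( ((1 + A₀) * (1 + A₀)ᴴ + (1 + A₁) * (1 + A₁)ᴴ) ⊗ₖ ((1 - B₀) * (1 - B₀)ᴴ)
      + ((1 - A₀) * (1 - A₀)ᴴ) ⊗ₖ ((1 + B₁) * (1 + B₁)ᴴ)
      + ((1 - A₁) * (1 - A₁)ᴴ) ⊗ₖ ((1 - B₁) * (1 - B₁)ᴴ) )).PosSemidef :=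
    ((kron_psd (pA0p.add pA1p) pB0m).add (kron_psd pA0m pB1p)).add (kron_psd pA1m pB1m)
  have hS3 : (( ((1 - A₀) * (1 - A₀)ᴴ) ⊗ₖ (1 : Matrix (Fin dB) (Fin dB) ℂ) )).PosSemidef :=
    kron_psd pA0m Matrix.PosSemidef.one
  have hS4 : (( (1 : Matrix (Fin dA) (Fin dA) ℂ) ⊗ₖ ((1 - B₀) * (1 - B₀)ᴴ) )).PosSemidef :=
    kron_psd Matrix.PosSemidef.one pB0m
  -- expand the certificates as linear combinations of the basic operators
  have idA : ((1 - A₀) * (1 - A₀)ᴴ) ⊗ₖ ((1 + B₀) * (1 + B₀)ᴴ + (1 + B₁) * (1 + B₁)ᴴ)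
      + ((1 + A₁) * (1 + A₁)ᴴ) ⊗ₖ ((1 - B₀) * (1 - B₀)ᴴ)
      + ((1 - A₁) * (1 - A₁)ᴴ) ⊗ₖ ((1 - B₁) * (1 - B₁)ᴴ)
      = (16 : ℂ) • (1 : Matrix (Fin dA × Fin dB) (Fin dA × Fin dB) ℂ)
        + (-8 : ℂ) • (A₀ ⊗ₖ (1 : Matrix (Fin dB) (Fin dB) ℂ))
        + (-4 : ℂ) • (A₀ ⊗ₖ B₀) + (-4 : ℂ) • (A₀ ⊗ₖ B₁)
        + (-4 : ℂ) • (A₁ ⊗ₖ B₀) + (4 : ℂ) • (A₁ ⊗ₖ B₁) := by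
    rw [sq_one_sub A₀ hA₀ hA₀2, sq_one_add A₁ hA₁ hA₁2, sq_one_sub A₁ hA₁ hA₁2,
      sq_one_add B₀ hB₀ hB₀2, sq_one_add B₁ hB₁ hB₁2, sq_one_sub B₀ hB₀ hB₀2,
      sq_one_sub B₁ hB₁ hB₁2]
    simp only [add_kronecker, kronecker_add, smul_kronecker, kronecker_smul,
      one_kronecker_one]
    module
  have idB : ((1 + A₀) * (1 + A₀)ᴴ + (1 + A₁) * (1 + A₁)ᴴ) ⊗ₖ ((1 - B₀) * (1 - B₀)ᴴ)
      + ((1 - A₀) * (1 - A₀)ᴴ) ⊗ₖ ((1 + B₁) * (1 + B₁)ᴴ)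
      + ((1 - A₁) * (1 - A₁)ᴴ) ⊗ₖ ((1 - B₁) * (1 - B₁)ᴴ)
      = (16 : ℂ) • (1 : Matrix (Fin dA × Fin dB) (Fin dA × Fin dB) ℂ)
        + (-8 : ℂ) • ((1 : Matrix (Fin dA) (Fin dA) ℂ) ⊗ₖ B₀)
        + (-4 : ℂ) • (A₀ ⊗ₖ B₀) + (-4 : ℂ) • (A₀ ⊗ₖ B₁)
        + (-4 : ℂ) • (A₁ ⊗ₖ B₀) + (4 : ℂ) • (A₁ ⊗ₖ B₁) := by
    rw [sq_one_add A₀ hA₀ hA₀2, sq_one_add A₁ hA₁ hA₁2, sq_one_sub A₀ hA₀ hA₀2,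
      sq_one_sub A₁ hA₁ hA₁2, sq_one_add B₁ hB₁ hB₁2, sq_one_sub B₀ hB₀ hB₀2,
      sq_one_sub B₁ hB₁ hB₁2]
    simp only [add_kronecker, kronecker_add, smul_kronecker, kronecker_smul,
      one_kronecker_one]
    module
  have idA0 : ((1 - A₀) * (1 - A₀)ᴴ) ⊗ₖ (1 : Matrix (Fin dB) (Fin dB) ℂ)
      = (2 : ℂ) • (1 : Matrix (Fin dA × Fin dB) (Fin dA × Fin dB) ℂ)
        + (-2 : ℂ) • (A₀ ⊗ₖ (1 : Matrix (Fin dB) (Fin dB) ℂ)) := by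
    rw [sq_one_sub A₀ hA₀ hA₀2]
    simp only [add_kronecker, smul_kronecker, one_kronecker_one]
  have idB0 : (1 : Matrix (Fin dA) (Fin dA) ℂ) ⊗ₖ ((1 - B₀) * (1 - B₀)ᴴ)
      = (2 : ℂ) • (1 : Matrix (Fin dA × Fin dB) (Fin dA × Fin dB) ℂ)
        + (-2 : ℂ) • ((1 : Matrix (Fin dA) (Fin dA) ℂ) ⊗ₖ B₀) := by
    rw [sq_one_sub B₀ hB₀ hB₀2]
    simp only [kronecker_add, kronecker_smul, one_kronecker_one]
  -- turn each into a scalar inequality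
  have h1 := trace_mul_psd_re_nonneg hρ hS1
  have h2 := trace_mul_psd_re_nonneg hρ hS2
  have h3 := trace_mul_psd_re_nonneg hρ hS3
  have h4 := trace_mul_psd_re_nonneg hρ hS4
  rw [idA] at h1
  rw [idB] at h2
  rw [idA0] at h3
  rw [idB0] at h4
  simp only [mul_add, mul_smul_comm, mul_one, trace_add, trace_smul, smul_eq_mul,
    hρtr, Complex.add_re, Complex.mul_re, Complex.neg_re, Complex.neg_im,
    Complex.re_ofNat, Complex.im_ofNat, Complex.one_re, Complex.one_im,
    neg_zero, zero_mul, mul_zero, sub_zero, mul_one] at h1 h2 h3 h4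
  have goalEq : ((ρ * (A₀ ⊗ₖ B₀ + A₀ ⊗ₖ B₁ + A₁ ⊗ₖ B₀ - A₁ ⊗ₖ B₁)).trace).re
      = ((ρ * (A₀ ⊗ₖ B₀)).trace).re + ((ρ * (A₀ ⊗ₖ B₁)).trace).re
        + ((ρ * (A₁ ⊗ₖ B₀)).trace).re - ((ρ * (A₁ ⊗ₖ B₁)).trace).re := by
    simp [mul_add, mul_sub, trace_add, trace_sub, Complex.add_re, Complex.sub_re]
  rw [goalEq]
  set x00 := ((ρ * (A₀ ⊗ₖ B₀)).trace).re with hx00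
  set x01 := ((ρ * (A₀ ⊗ₖ B₁)).trace).re with hx01
  set x10 := ((ρ * (A₁ ⊗ₖ B₀)).trace).re with hx10
  set x11 := ((ρ * (A₁ ⊗ₖ B₁)).trace).re with hx11
  set xA := ((ρ * (A₀ ⊗ₖ (1 : Matrix (Fin dB) (Fin dB) ℂ))).trace).re with hxA
  set xB := ((ρ * ((1 : Matrix (Fin dA) (Fin dA) ℂ) ⊗ₖ B₀)).trace).re with hxB
  rcases le_total αA 2 with hc | hc
  · nlinarith [mul_nonneg hαA (by linarith : (0:ℝ) ≤ 16 + -8 * xA + -4 * x00 + -4 * x01 + -4 * x10 + 4 * x11),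
      mul_nonneg (by linarith : (0:ℝ) ≤ 2 - αA)
        (by linarith : (0:ℝ) ≤ 16 + -8 * xB + -4 * x00 + -4 * x01 + -4 * x10 + 4 * x11),
      mul_nonneg (by linarith : (0:ℝ) ≤ αA + αB - 2) (by linarith : (0:ℝ) ≤ 2 + -2 * xB)]
  · nlinarith [h1, mul_nonneg (by linarith : (0:ℝ) ≤ αA - 2) (by linarith : (0:ℝ) ≤ 2 + -2 * xA),
      mul_nonneg hαB (by linarith : (0:ℝ) ≤ 2 + -2 * xB)]
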